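/- arXiv:1408.1463 — 5 statements merged into one kernel-verified Lean document; each statement's English description precedes it below -/
import Mathlib

section
/- Let V be the binary string of length n with ones exactly at positions x_1 < ... < x_r. Then V is non-invertible under cyclic convolution over F_2 if and only if n is a multiple of the period length of some nonzero purely periodic solution to the recurrence L(i) = Σ_{l=2}^{r} L(i - (x_l - x_1)) (mod 2). -/
open Finset

/-- Cyclic convolution over `F₂` of two binary strings of length `n`. -/
def conv {n : ℕ} [NeZero n] (V W : ZMod n → ZMod 2) : ZMod n → ZMod 2 :=
  fun j => ∑ s : ZMod n, V s * W (j - s)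

section aux
variable {n : ℕ} [NeZero n]

lemma conv_sub (V W₁ W₂ : ZMod n → ZMod 2) :
    conv V (W₁ - W₂) = conv V W₁ - conv V W₂ := by
  funext j
  simp [conv, mul_sub, Finset.sum_sub_distrib]

lemma conv_assoc' (A B C : ZMod n → ZMod 2) (j : ZMod n) :
    ∑ s : ZMod n, conv A B s * C (j - s) = ∑ u : ZMod n, B u * conv A C (j - u) := by
  simp only [conv, Finset.sum_mul, Finset.mul_sum]
  rw [Finset.sum_comm]
  conv_rhs => rw [Finset.sum_comm]
  refine Finset.sum_congr rfl fun t _ => ?_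
  rw [← Equiv.sum_comp (Equiv.addRight t) (fun s => A t * B (s - t) * C (j - s))]
  refine Finset.sum_congr rfl fun u _ => ?_
  simp only [Equiv.coe_addRight, add_sub_cancel_right]
  rw [← sub_sub]
  ring

lemma conv_eq_sum {r : ℕ} (c : Fin r → ZMod n) (hc : Function.Injective c)
    (V W : ZMod n → ZMod 2)
    (hV : ∀ s, V s = if ∃ i, c i = s then 1 else 0) (j : ZMod n) :
    conv V W j = ∑ l : Fin r, W (j - c l) := by
  have h1 : ∀ s : ZMod n, V s * W (j - s)
      = if s ∈ Finset.image c Finset.univ then W (j - s) else 0 := by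
    intro s
    rw [hV s]
    by_cases h : ∃ i, c i = s
    · rw [if_pos h, if_pos (by simpa using h), one_mul]
    · rw [if_neg h, if_neg (by simpa using h), zero_mul]
  simp only [conv, h1]
  rw [Finset.sum_ite_mem, Finset.univ_inter,
    Finset.sum_image (fun a _ b _ h => hc h)]

lemma nonunit_iff (V : ZMod n → ZMod 2) :
    (¬ ∃ W : ZMod n → ZMod 2, conv V W = fun j => if j = 0 then 1 else 0) ↔
      ∃ W : ZMod n → ZMod 2, W ≠ 0 ∧ conv V W = 0 := by
  constructor
  · intro h
    have hns : ¬ Function.Surjective (conv V) := fun hs => h (hs _)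
    have hni : ¬ Function.Injective (conv V) := by
      rwa [Finite.injective_iff_surjective]
    simp only [Function.Injective, not_forall] at hni
    obtain ⟨W₁, W₂, heq, hne⟩ := hni
    refine ⟨W₁ - W₂, sub_ne_zero.mpr hne, ?_⟩
    rw [conv_sub, heq, sub_self]
  · rintro ⟨W, hW, hVW⟩ ⟨W', hW'⟩
    apply hW
    funext j
    have h1 : conv (conv V W') W j = W j := by
      rw [hW']
      simp only [conv]
      rw [Finset.sum_eq_single 0] <;> simp +contextual
    have h2 : conv (conv V W') W j = 0 := by
      rw [show conv (conv V W') W j = ∑ u : ZMod n, W' u * conv V W (j - u) from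
        conv_assoc' V W' W j, hVW]
      simp
    rw [← h1, h2]
    rfl

end aux

lemma per_add_mul (L : ℕ → ZMod 2) (m : ℕ) (hper : ∀ i, L (i + m) = L i) :
    ∀ k i, L (i + k * m) = L i := by
  intro k
  induction k with
  | zero => simp
  | succ k ih => intro i; rw [Nat.succ_mul, ← Nat.add_assoc, hper, ih]

lemma per_mod (L : ℕ → ZMod 2) (m : ℕ) (hper : ∀ i, L (i + m) = L i)
    {a b : ℕ} (hab : a % m = b % m) : L a = L b := by
  have h : ∀ a : ℕ, L a = L (a % m) := by
    intro a
    conv_lhs => rw [← Nat.mod_add_div a m, Nat.mul_comm]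
    exact per_add_mul L m hper _ _
  rw [h a, h b, hab]

theorem stmt5 (n r : ℕ) [NeZero n] [NeZero r] (x : Fin r → ℕ)
    (hmono : StrictMono x) (hlt : ∀ i, x i < n)
    (V : ZMod n → ZMod 2)
    (hV : ∀ s, V s = if ∃ i : Fin r, ((x i : ℕ) : ZMod n) = s then 1 else 0) :
    (¬ ∃ W : ZMod n → ZMod 2,
        conv V W = fun j => if j = 0 then 1 else 0) ↔
      ∃ (L : ℕ → ZMod 2) (p : ℕ), 0 < p ∧ L ≠ 0 ∧
        (∀ i, (∀ l, x l - x 0 ≤ i) →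
          L i = ∑ l ∈ Finset.univ.erase (0 : Fin r), L (i - (x l - x 0))) ∧
        (∀ i, L (i + p) = L i) ∧
        (∀ d, 0 < d → (∀ i, L (i + d) = L i) → p ≤ d) ∧
        p ∣ n := by
  classical
  rw [nonunit_iff]
  have hn : 0 < n := Nat.pos_of_ne_zero (NeZero.ne n)
  set c : Fin r → ZMod n := fun l => ((x l : ℕ) : ZMod n) with hc_def
  have hcval : ∀ l, (c l).val = x l := fun l => ZMod.val_cast_of_lt (hlt l)
  have hcinj : Function.Injective c := by
    intro a b h
    apply hmono.injective
    rw [← hcval a, ← hcval b, h]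
  have hVsum : ∀ (W : ZMod n → ZMod 2) j, conv V W j = ∑ l : Fin r, W (j - c l) :=
    fun W j => conv_eq_sum c hcinj V W hV j
  have key : ∀ a b : ZMod 2, a + b = 0 → a = b := by decide
  have key2 : ∀ a : ZMod 2, a + a = 0 := by decide
  have hx0 : ∀ l, x 0 ≤ x l := fun l => hmono.monotone (Fin.zero_le l)
  have hcl : ∀ l, c l = c 0 + ((x l - x 0 : ℕ) : ZMod n) := by
    intro l
    simp only [hc_def]
    rw [← Nat.cast_add, Nat.add_sub_cancel' (hx0 l)]
  have hc2n : ((2 * n : ℕ) : ZMod n) = 0 := by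
    push_cast [ZMod.natCast_self]
    ring
  constructor
  · rintro ⟨W, hW, hVW⟩
    set L : ℕ → ZMod 2 := fun i => W ((i : ℕ) : ZMod n) with hL
    have hpern : ∀ i, L (i + n) = L i := by
      intro i
      simp only [hL]
      congr 1
      push_cast [ZMod.natCast_self]
      ring
    have hrec : ∀ i, (∀ l, x l - x 0 ≤ i) →
        L i = ∑ l ∈ Finset.univ.erase (0 : Fin r), L (i - (x l - x 0)) := by
      intro i hi
      have hs0 : ∑ l : Fin r, W ((i : ZMod n) + c 0 - c l) = 0 := by
        rw [← hVsum W ((i : ZMod n) + c 0), hVW]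
        rfl
      have el : ∀ l : Fin r, W ((i : ZMod n) + c 0 - c l) = L (i - (x l - x 0)) := by
        intro l
        simp only [hL]
        congr 1
        rw [hcl l, Nat.cast_sub (hi l)]
        ring
      rw [← Finset.add_sum_erase _ _ (Finset.mem_univ (0 : Fin r)),
        el 0, Nat.sub_self, Nat.sub_zero,
        Finset.sum_congr rfl (fun l _ => el l)] at hs0
      exact key _ _ hs0
    have hLne : L ≠ 0 := by
      intro h0
      apply hW
      funext s
      have h1 : L s.val = 0 := by rw [h0]; rfl
      rwa [show L s.val = W s by simp only [hL]; rw [ZMod.natCast_rightInverse s]] at h1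
    have hex : ∃ d, 0 < d ∧ ∀ i, L (i + d) = L i := ⟨n, hn, hpern⟩
    set p := Nat.find hex with hp
    have hps := Nat.find_spec hex
    have hple : ∀ d, 0 < d → (∀ i, L (i + d) = L i) → p ≤ d :=
      fun d h1 h2 => Nat.find_min' hex ⟨h1, h2⟩
    have hdvd : p ∣ n := by
      have hs' : ∀ i, L (i + n % p) = L i := by
        intro i
        calc L (i + n % p) = L (i + n % p + (n / p) * p) :=
              (per_add_mul L p hps.2 _ _).symm
          _ = L (i + n) := by rw [Nat.add_assoc, Nat.mod_add_div']
          _ = L i := hpern i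
      by_contra hnd
      have h1 : 0 < n % p := Nat.pos_of_ne_zero (fun h => hnd (Nat.dvd_of_mod_eq_zero h))
      have h2 : n % p < p := Nat.mod_lt _ hps.1
      have := hple _ h1 hs'
      omega
    exact ⟨L, p, hps.1, hLne, hrec, hps.2, hple, hdvd⟩
  · rintro ⟨L, p, hp, hLne, hrec, hper, _, hdvd⟩
    obtain ⟨k, hk⟩ := hdvd
    have hpern : ∀ i, L (i + n) = L i := by
      intro i
      rw [hk, Nat.mul_comm]
      exact per_add_mul L p hper k i
    have hmod : ∀ a b : ℕ, (a : ZMod n) = (b : ZMod n) → L a = L b := by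
      intro a b hab
      exact per_mod L n hpern ((ZMod.natCast_eq_natCast_iff a b n).mp hab)
    set W : ZMod n → ZMod 2 := fun s => L (s.val + 2 * n) with hWdef
    have hWL : ∀ i : ℕ, W ((i : ℕ) : ZMod n) = L i := by
      intro i
      simp only [hWdef]
      apply hmod
      rw [Nat.cast_add, hc2n, add_zero, ZMod.natCast_rightInverse]
    refine ⟨W, ?_, ?_⟩
    · intro h0
      apply hLne
      funext i
      have h1 : W ((i : ℕ) : ZMod n) = 0 := by rw [h0]; rfl
      rw [← hWL i, h1]
      rfl
    · funext j
      show conv V W j = 0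
      rw [hVsum W j]
      have hterm : ∀ l : Fin r, W (j - c l) = L ((j - c 0).val + 2 * n - (x l - x 0)) := by
        intro l
        simp only [hWdef]
        apply hmod
        have hd : x l - x 0 ≤ (j - c 0).val + 2 * n := by
          have := hlt l
          omega
        rw [Nat.cast_sub hd, Nat.cast_add, Nat.cast_add, hc2n, add_zero, add_zero,
          ZMod.natCast_rightInverse, ZMod.natCast_rightInverse, hcl l]
        ring
      rw [Finset.sum_congr rfl (fun l _ => hterm l),
        ← Finset.add_sum_erase _ _ (Finset.mem_univ (0 : Fin r)),
        Nat.sub_self, Nat.sub_zero,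
        ← hrec ((j - c 0).val + 2 * n) (fun l => by have := hlt l; omega)]
      exact key2 _
end

section
/- For the block collection C = (0,1,...,h) with h ≥ 1, the recurrence L(i) = Σ_{k=1}^{h} L(i-k) (mod 2) admits a nonzero purely periodic solution with minimal period exactly d, for every divisor d of h+1 satisfying: d > 1 if h is even; and d ≠ 2 if d = 2 would require 4 ∤ (h+1) (i.e., period 2 exists iff 4 | h+1). -/
open Finset

lemma shift_sum (L : ℕ → ZMod 2) (m : ℕ) (hper : ∀ i, L (i + m) = L i) :
    ∀ a, ∑ j ∈ Finset.range m, L (a + j) = ∑ j ∈ Finset.range m, L j := by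
  intro a
  induction a with
  | zero => simp
  | succ a ih =>
    have e1 : ∑ j ∈ Finset.range (m+1), L (a + j)
        = (∑ j ∈ Finset.range m, L (a + j)) + L (a + m) := Finset.sum_range_succ _ _
    have e2 : ∑ j ∈ Finset.range (m+1), L (a + j)
        = (∑ j ∈ Finset.range m, L (a + (j + 1))) + L (a + 0) := Finset.sum_range_succ' _ _
    have e3 : ∑ j ∈ Finset.range m, L (a + (j + 1)) = ∑ j ∈ Finset.range m, L (a + 1 + j) := by
      apply Finset.sum_congr rfl; intro j _; ring_nf
    have e5 : (∑ j ∈ Finset.range m, L (a + j)) + L (a + m)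
        = (∑ j ∈ Finset.range m, L (a + 1 + j)) + L (a + 0) := by rw [← e1, e2, e3]
    rw [add_zero, hper a] at e5
    have e6 := add_right_cancel e5
    rw [← e6, ih]

lemma mult_sum (L : ℕ → ZMod 2) (d : ℕ) (hper : ∀ i, L (i + d) = L i) :
    ∀ n, ∑ j ∈ Finset.range (n * d), L j = n • ∑ j ∈ Finset.range d, L j := by
  intro n
  induction n with
  | zero => simp
  | succ n ih =>
    have : (n + 1) * d = n * d + d := by ring
    rw [this, Finset.sum_range_add, ih, shift_sum L d hper (n * d), succ_nsmul]

lemma aux_sum (q : ℕ) :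
    ∑ j ∈ Finset.range (q + 3), (if j ≤ 1 then (1 : ZMod 2) else 0) = 0 := by
  induction q with
  | zero => decide
  | succ q ih =>
    rw [show q + 1 + 3 = (q + 3) + 1 by ring, Finset.sum_range_succ, ih, zero_add,
      if_neg (by omega)]

lemma rec_of_periodic (L : ℕ → ZMod 2) (h d : ℕ) (hd : 0 < d)
    (hdvd : d ∣ (h + 1)) (hper : ∀ i, L (i + d) = L i)
    (hS : ((h + 1) / d) • (∑ j ∈ Finset.range d, L j) = 0) :
    ∀ i, h ≤ i → L i = ∑ k ∈ Finset.Icc 1 h, L (i - k) := by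
  intro i hi
  have hq : (h + 1) / d * d = h + 1 := Nat.div_mul_cancel hdvd
  have hper' : ∀ x, L (x + (h + 1)) = L x := by
    intro x
    have key : ∀ n x, L (x + n * d) = L x := by
      intro n
      induction n with
      | zero => simp
      | succ n ih =>
        intro x
        have e : x + (n + 1) * d = (x + n * d) + d := by ring
        rw [e, hper, ih]
    rw [← hq]; exact key _ x
  have htot : ∑ j ∈ Finset.range (h + 1), L (i - h + j) = 0 := by
    rw [shift_sum L (h+1) hper' (i - h), ← hq, mult_sum L d hper, hS]
  have hre : ∑ k ∈ Finset.Icc 1 h, L (i - k) = ∑ j ∈ Finset.range h, L (i - h + j) := by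
    rw [← Finset.sum_range_reflect (fun j => L (i - h + j)) h]
    rw [show Finset.Icc 1 h = Finset.Ico 1 (h + 1) by rfl, Finset.sum_Ico_eq_sum_range]
    apply Finset.sum_congr (by simp) ?_
    intro k hk
    simp only [Finset.mem_range] at hk
    congr 1
    omega
  have hsplit : ∑ j ∈ Finset.range (h + 1), L (i - h + j)
      = (∑ j ∈ Finset.range h, L (i - h + j)) + L i := by
    rw [Finset.sum_range_succ]
    congr 2
    omega
  rw [hre]
  have key : (∑ j ∈ Finset.range h, L (i - h + j)) + L i = 0 := by rw [← hsplit, htot]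
  have h2 : L i + L i = 0 := by
    have : ∀ x : ZMod 2, x + x = 0 := by decide
    exact this _
  calc L i = 0 + L i := (zero_add _).symm
    _ = ((∑ j ∈ Finset.range h, L (i - h + j)) + L i) + L i := by rw [key]
    _ = (∑ j ∈ Finset.range h, L (i - h + j)) + (L i + L i) := by ring
    _ = ∑ j ∈ Finset.range h, L (i - h + j) := by rw [h2, add_zero]

theorem stmt9 (h d : ℕ) (hh : 1 ≤ h) (hd : 0 < d) (hdvd : d ∣ (h + 1))
    (hev : Even h → 1 < d) (h2 : d = 2 → 4 ∣ (h + 1)) :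
    ∃ L : ℕ → ZMod 2,
      (∀ i, h ≤ i → L i = ∑ k ∈ Finset.Icc 1 h, L (i - k)) ∧
      L ≠ 0 ∧
      (∀ i, L (i + d) = L i) ∧
      ∀ d', 0 < d' → (∀ i, L (i + d') = L i) → d ≤ d' := by
  have hx2 : ∀ x : ZMod 2, x + x = 0 := by decide
  rcases eq_or_lt_of_le (Nat.succ_le_of_lt hd) with h1 | hd1
  · -- d = 1
    have hd1 : d = 1 := h1.symm
    subst hd1
    have hodd : ¬ Even h := fun he => absurd (hev he) (lt_irrefl 1)
    have heven : 2 ∣ (h + 1) := by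
      rcases Nat.odd_iff.mp (Nat.not_even_iff_odd.mp hodd) with hm
      omega
    refine ⟨fun _ => (1 : ZMod 2), ?_, ?_, ?_, fun d' hd' _ => hd'⟩
    · apply rec_of_periodic (fun _ => (1:ZMod 2)) h 1 one_pos ⟨h + 1, by ring⟩ (fun i => rfl)
      simp only [Finset.range_one, Finset.sum_singleton, Nat.div_one, nsmul_eq_mul, mul_one]
      exact (ZMod.natCast_eq_zero_iff _ _).mpr heven
    · intro hL
      have := congrFun hL 0
      simp at this
    · intro i; rfl
  · -- d ≥ 2
    rcases eq_or_lt_of_le (Nat.succ_le_of_lt hd1) with h1 | hd2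
    · -- d = 2
      have hd2 : d = 2 := h1.symm
      subst hd2
      have h4 : 4 ∣ (h + 1) := h2 rfl
      set L : ℕ → ZMod 2 := fun i => if i % 2 = 0 then 1 else 0 with hLdef
      have hper : ∀ i, L (i + 2) = L i := by
        intro i; simp only [hLdef, Nat.add_mod_right]
      refine ⟨L, ?_, ?_, hper, ?_⟩
      · apply rec_of_periodic L h 2 two_pos hdvd hper
        obtain ⟨m, hm⟩ : ∃ m, (h + 1) / 2 = m * 2 := by
          obtain ⟨k, hk⟩ := h4; exact ⟨k, by omega⟩
        rw [hm, mul_nsmul, two_nsmul, hx2 _]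
      · intro hL
        have := congrFun hL 0
        simp [hLdef] at this
      · intro d' hd' hper'
        by_contra hc
        push_neg at hc
        interval_cases d'
        have := hper' 0
        simp [hLdef] at this
    · -- d ≥ 3
      set L : ℕ → ZMod 2 := fun i => if i % d ≤ 1 then 1 else 0 with hLdef
      have hper : ∀ i, L (i + d) = L i := by
        intro i; simp only [hLdef, Nat.add_mod_right]
      have hS : ∑ j ∈ Finset.range d, L j = 0 := by
        have hcongr : ∑ j ∈ Finset.range d, L j
            = ∑ j ∈ Finset.range d, (if j ≤ 1 then (1 : ZMod 2) else 0) := by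
          apply Finset.sum_congr rfl
          intro j hj
          simp only [Finset.mem_range] at hj
          simp [hLdef, Nat.mod_eq_of_lt hj]
        rw [hcongr]
        obtain ⟨k, hk⟩ : ∃ k, d = k + 3 := ⟨d - 3, by omega⟩
        rw [hk]
        exact aux_sum k
      have v0 : L 0 = 1 := by simp [hLdef]
      have v1 : L 1 = 1 := by
        simp only [hLdef]
        rw [Nat.mod_eq_of_lt (by omega), if_pos (le_refl 1)]
      have v2 : L 2 = 0 := by
        simp only [hLdef]
        rw [Nat.mod_eq_of_lt (by omega), if_neg (by omega)]
      refine ⟨L, ?_, ?_, hper, ?_⟩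
      · exact rec_of_periodic L h d hd hdvd hper (by rw [hS, smul_zero])
      · intro hL
        have := congrFun hL 0
        rw [v0] at this
        exact absurd this (by decide)
      · intro d' hd' hper'
        by_contra hc
        push_neg at hc
        rcases eq_or_lt_of_le (Nat.succ_le_of_lt hd') with he | h2'
        · -- d' = 1
          have hd'1 : d' = 1 := he.symm
          subst hd'1
          have a1 := hper' 0
          have a2 := hper' 1
          norm_num at a1 a2
          rw [a2, a1, v0] at v2
          exact absurd v2 (by decide)
        · -- 2 ≤ d' < d
          have e : L d' = L 0 := by
            have := hper' 0
            simpa using this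
          rw [v0] at e
          have : L d' = 0 := by
            simp only [hLdef]
            rw [Nat.mod_eq_of_lt hc, if_neg (by omega)]
          rw [this] at e
          exact absurd e (by decide)
end

section
/- For the exponential collection E_n = (1, 2, 4, ..., 2^n), every nonzero purely periodic solution of the recurrence L(i) = Σ_{l=1}^{n} L(i - (2^l - 1)) (mod 2) has period length dividing a divisor of 2^{n+1} - 1; in particular every element of the spectrum kernel of E_n divides 2^{n+1} - 1. -/
open Finset

private lemma sym_sum_zmod2 (s : Finset ℕ) (f : ℕ → ℕ → ZMod 2)
    (hf : ∀ a b, f a b = f b a) :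
    ∑ a ∈ s, ∑ b ∈ s, f a b = ∑ a ∈ s, f a a := by
  classical
  induction s using Finset.induction_on with
  | empty => simp
  | insert _ _ hc ih =>
    rename_i c s
    rw [Finset.sum_insert hc, Finset.sum_insert hc, Finset.sum_insert hc]
    simp_rw [Finset.sum_insert hc]
    rw [Finset.sum_add_distrib, ih]
    have h1 : ∑ x ∈ s, f x c = ∑ b ∈ s, f c b :=
      Finset.sum_congr rfl (fun x _ => hf x c)
    have h2 : ∀ x : ZMod 2, x + x = 0 := by decide
    rw [h1, add_assoc, ← add_assoc (∑ b ∈ s, f c b), h2, zero_add]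

theorem stmt15 (n p : ℕ) (hn : 1 ≤ n) (L : ℕ → ZMod 2) (hL : L ≠ 0)
    (hrec : ∀ i, 2 ^ n - 1 ≤ i →
      L i = ∑ l ∈ Finset.Icc 1 n, L (i - (2 ^ l - 1)))
    (hp : 0 < p) (hper : ∀ i, L (i + p) = L i)
    (hmin : ∀ d, 0 < d → (∀ i, L (i + d) = L i) → p ≤ d) :
    p ∣ 2 ^ (n + 1) - 1 := by
  have h2 : ∀ x : ZMod 2, x + x = 0 := by decide
  have hcancel : ∀ a b : ZMod 2, a + b = 0 → b = a := by decide
  have hpow : ∀ l, l ≤ n → 2 ^ l ≤ 2 ^ n :=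
    fun l hl => Nat.pow_le_pow_right (by norm_num) hl
  -- Step A : the homogeneous relation
  have hS : ∀ j, ∑ l ∈ Finset.range (n + 1), L (j + (2 ^ n - 2 ^ l)) = 0 := by
    intro j
    have hr := hrec (j + (2 ^ n - 1)) (Nat.le_add_left _ _)
    have hr' : L (j + (2 ^ n - 1)) = ∑ l ∈ Finset.Icc 1 n, L (j + (2 ^ n - 2 ^ l)) := by
      rw [hr]
      refine Finset.sum_congr rfl fun l hl => ?_
      simp only [Finset.mem_Icc] at hl
      have h1 := hpow l hl.2
      have h3 : 1 ≤ 2 ^ l := Nat.one_le_two_pow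
      congr 1
      omega
    have hins : Finset.range (n + 1) = insert 0 (Finset.Icc 1 n) := by
      ext x; simp; omega
    rw [hins, Finset.sum_insert (by simp), pow_zero, ← hr']
    exact h2 _
  -- Step B : 2^(n+1) - 1 is a period
  have hD : ∀ j, L (j + (2 ^ (n + 1) - 1)) = L j := by
    intro j
    have hT : ∑ a ∈ Finset.range (n + 1), ∑ b ∈ Finset.range (n + 1),
        L (j + (2 ^ n - 2 ^ a) + (2 ^ n - 2 ^ b)) = 0 :=
      Finset.sum_eq_zero fun a _ => hS (j + (2 ^ n - 2 ^ a))
    have hsym := sym_sum_zmod2 (Finset.range (n + 1))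
      (fun a b => L (j + (2 ^ n - 2 ^ a) + (2 ^ n - 2 ^ b)))
      (fun a b => by
        show L (j + (2 ^ n - 2 ^ a) + (2 ^ n - 2 ^ b)) =
          L (j + (2 ^ n - 2 ^ b) + (2 ^ n - 2 ^ a))
        rw [add_right_comm])
    have hdiag : ∑ a ∈ Finset.range (n + 1),
        L (j + (2 ^ n - 2 ^ a) + (2 ^ n - 2 ^ a)) = 0 := by
      rw [← hsym]; exact hT
    have hdiag' : ∑ a ∈ Finset.range (n + 1),
        L (j + (2 ^ (n + 1) - 2 ^ (a + 1))) = 0 := by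
      rw [← hdiag]
      refine Finset.sum_congr rfl fun a ha => ?_
      simp only [Finset.mem_range] at ha
      have h1 := hpow a (by omega)
      have e1 : 2 ^ (a + 1) = 2 * 2 ^ a := by ring
      have e2 : 2 ^ (n + 1) = 2 * 2 ^ n := by ring
      congr 1
      omega
    have h0' : ∑ b ∈ Finset.range (n + 1),
        L (j + (2 ^ (n + 1) - 2 ^ b)) = 0 := by
      rw [← hS (j + 2 ^ n)]
      refine Finset.sum_congr rfl fun b hb => ?_
      simp only [Finset.mem_range] at hb
      have h1 := hpow b (by omega)
      have e2 : 2 ^ (n + 1) = 2 * 2 ^ n := by ring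
      congr 1
      omega
    have key : (∑ a ∈ Finset.range (n + 1), L (j + (2 ^ (n + 1) - 2 ^ (a + 1)))) +
        ∑ b ∈ Finset.range (n + 1), L (j + (2 ^ (n + 1) - 2 ^ b)) =
        L j + L (j + (2 ^ (n + 1) - 1)) := by
      rw [Finset.sum_range_succ, Finset.sum_range_succ']
      rw [Nat.sub_self, add_zero, pow_zero]
      rw [add_add_add_comm, h2, zero_add]
    have hz : L j + L (j + (2 ^ (n + 1) - 1)) = 0 := by
      rw [← key, hdiag', h0', add_zero]
    exact hcancel _ _ hz
  -- Step C : the minimal period divides any period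
  have hmul : ∀ k i, L (i + p * k) = L i := by
    intro k
    induction k with
    | zero => simp
    | succ k ih =>
      intro i
      have e : i + p * (k + 1) = (i + p) + p * k := by ring
      rw [e, ih, hper]
  have h2pow : 2 ≤ 2 ^ (n + 1) := by
    calc 2 = 2 ^ 1 := by norm_num
    _ ≤ 2 ^ (n + 1) := Nat.pow_le_pow_right (by norm_num) (by omega)
  have hr0 : (2 ^ (n + 1) - 1) % p = 0 := by
    by_contra hne
    have hrlt : (2 ^ (n + 1) - 1) % p < p := Nat.mod_lt _ hp
    have hperr : ∀ i, L (i + (2 ^ (n + 1) - 1) % p) = L i := by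
      intro i
      have hdm := Nat.mod_add_div (2 ^ (n + 1) - 1) p
      have e : i + (2 ^ (n + 1) - 1) =
          i + (2 ^ (n + 1) - 1) % p + p * ((2 ^ (n + 1) - 1) / p) := by omega
      calc L (i + (2 ^ (n + 1) - 1) % p)
          = L (i + (2 ^ (n + 1) - 1) % p + p * ((2 ^ (n + 1) - 1) / p)) := (hmul _ _).symm
        _ = L (i + (2 ^ (n + 1) - 1)) := by rw [← e]
        _ = L i := hD i
    have := hmin _ (Nat.pos_of_ne_zero hne) hperr
    omega
  exact Nat.dvd_of_mod_eq_zero hr0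
end

section
/- For a collection C = (x_1, ..., x_r) with r odd and a positive integer a coprime to every period length of C, if b is a period length of C then b is also a period length of the scaled collection aC = (a·x_1, ..., a·x_r): given a purely periodic solution of period b for C, the sequence F defined on each residue class mod a by independent period-b solutions of C satisfies the aC recurrence. -/
open Finset

/-- `p` is a period length for the collection of positions `x`:
the minimal period of some nonzero purely periodic solution of the
recurrence determined by the shift collection `∂x`. -/
def IsPeriodLen (r : ℕ) [NeZero r] (x : Fin r → ℕ) (p : ℕ) : Prop :=
  0 < p ∧ ∃ L : ℕ → ZMod 2, L ≠ 0 ∧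
    (∀ i, (∀ l, x l - x 0 ≤ i) →
      L i = ∑ l ∈ Finset.univ.erase (0 : Fin r), L (i - (x l - x 0))) ∧
    (∀ i, L (i + p) = L i) ∧
    ∀ d, 0 < d → (∀ i, L (i + d) = L i) → p ≤ d

private lemma per_mul {G : ℕ → ZMod 2} {b : ℕ} (h : ∀ i, G (i + b) = G i) :
    ∀ m i, G (i + m * b) = G i := by
  intro m
  induction m with
  | zero => simp
  | succ m ih =>
      intro i
      have : i + (m + 1) * b = (i + m * b) + b := by ring
      rw [this, h, ih]

private lemma per_sub {G : ℕ → ZMod 2} {b : ℕ} (h : ∀ i, G (i + b) = G i)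
    {m i : ℕ} (hle : m * b ≤ i) : G (i - m * b) = G i := by
  have := per_mul h m (i - m * b)
  rw [Nat.sub_add_cancel hle] at this
  exact this.symm

theorem stmt17 (r a b : ℕ) [NeZero r] (hodd : Odd r) (ha : 0 < a)
    (x : Fin r → ℕ) (hmono : StrictMono x)
    (hcop : ∀ p, IsPeriodLen r x p → Nat.Coprime a p)
    (hb : IsPeriodLen r x b) :
    IsPeriodLen r (fun i => a * x i) b := by
  obtain ⟨hbpos, L, hL0, hrec, hper, hmin⟩ := hb
  have hcab : Nat.Coprime a b := hcop b ⟨hbpos, L, hL0, hrec, hper, hmin⟩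
  have ht : 0 < Nat.totient b := Nat.totient_pos.mpr hbpos
  set t := Nat.totient b with htdef
  have hmod : a ^ t ≡ 1 [MOD b] := Nat.ModEq.pow_totient hcab
  have h1le : 1 ≤ a ^ t := Nat.one_le_pow _ _ ha
  have hdvd : b ∣ a ^ t - 1 := (Nat.modEq_iff_dvd' h1le).mp hmod.symm
  set c := a ^ (t - 1) with hcdef
  set k := (a ^ t - 1) / b with hkdef
  have hca : c * a = 1 + k * b := by
    have h1 : k * b = a ^ t - 1 := Nat.div_mul_cancel hdvd
    have h2 : c * a = a ^ t := by
      have ht' : t - 1 + 1 = t := by omega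
      rw [hcdef, ← pow_succ, ht']
    omega
  have hc : 0 < c := pow_pos ha _
  -- key fact : the new sequence evaluated at multiples of a
  have hFa : ∀ m, L (c * (a * m)) = L m := by
    intro m
    have : c * (a * m) = m + (k * m) * b := by rw [← mul_assoc, hca]; ring
    rw [this, per_mul hper]
  refine ⟨hbpos, fun n => L (c * n), ?_, ?_, ?_, ?_⟩
  · -- nonzero
    intro hF
    apply hL0
    funext m
    have := congrFun hF (a * m)
    simp only [Pi.zero_apply] at this ⊢
    rw [← hFa m, this]
  · -- recurrence
    intro i hi
    simp only []
    have hi' : ∀ l, a * (x l - x 0) ≤ i := by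
      intro l
      rw [Nat.mul_sub]
      exact hi l
    have hsum : ∀ l : Fin r, l ∈ Finset.univ.erase (0 : Fin r) →
        L (c * (i - (a * x l - a * x 0))) = L (c * i - (x l - x 0)) := by
      intro l _
      set D := x l - x 0 with hD
      have h1 : a * x l - a * x 0 = a * D := (Nat.mul_sub a _ _).symm
      have h2 : c * (i - a * D) = c * i - c * (a * D) := Nat.mul_sub c _ _
      have h3 : c * (a * D) = D + (k * D) * b := by rw [← mul_assoc, hca]; ring
      have h4 : c * (a * D) ≤ c * i := Nat.mul_le_mul_left c (hi' l)
      have h5 : (k * D) * b ≤ c * i - D := by omega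
      have h6 : c * i - c * (a * D) = (c * i - D) - (k * D) * b := by omega
      rw [h1, h2, h6, per_sub hper h5]
    rw [Finset.sum_congr rfl hsum]
    exact hrec (c * i) (fun l => by
      have hD : x l - x 0 ≤ a * (x l - x 0) := Nat.le_mul_of_pos_left _ ha
      have : i ≤ c * i := Nat.le_mul_of_pos_left _ hc
      have := hi' l
      omega)
  · -- periodicity
    intro i
    simp only []
    rw [mul_add]
    exact per_mul hper c (c * i)
  · -- minimality
    intro d hd hFd
    refine hmin d hd ?_
    intro m
    have e1 : a * m + a * d = a * (m + d) := by ring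
    calc L (m + d) = L (c * (a * (m + d))) := (hFa _).symm
      _ = L (c * (a * m + a * d)) := by rw [e1]
      _ = L (c * (a * m)) := per_mul (G := fun n => L (c * n)) hFd a (a * m)
      _ = L m := hFa m
end

section
/- Let η(n, m) denote the largest divisor of n all of whose prime factors divide m. If C has spectrum kernel B, then for any positive integer a, the collection aC = (a·x_1, ..., a·x_r) has spectrum kernel {b·η(a, b) : b ∈ B}. -/
open Finset

/-- The caSpectrum of a collection: the set of its period lengths. -/
def caSpectrum (r : ℕ) [NeZero r] (x : Fin r → ℕ) : Set ℕ :=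
  {p | IsPeriodLen r x p}

/-- The kernel of a caSpectrum: its divisibility-minimal elements. -/
def kernel (S : Set ℕ) : Set ℕ :=
  {y ∈ S | ∀ z ∈ S, z ≠ y → ¬ z ∣ y}

/-- `eta n m`: the largest divisor of `n` all of whose prime factors divide `m`. -/
def eta (n m : ℕ) : ℕ :=
  ((n.divisors).filter (fun d => ∀ p ∈ d.primeFactors, p ∣ m)).sup id

lemma eta_spec {a : ℕ} (b : ℕ) (ha : a ≠ 0) :
    eta a b ∣ a ∧ (∀ p, p.Prime → p ∣ eta a b → p ∣ b) ∧
      ∀ d, d ∣ a → (∀ p, p.Prime → p ∣ d → p ∣ b) → d ∣ eta a b := by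
  classical
  set s := ((a.divisors).filter (fun d => ∀ p ∈ d.primeFactors, p ∣ b)) with hs
  have hmem : ∀ d, d ∈ s ↔ (d ∣ a ∧ ∀ p, p.Prime → p ∣ d → p ∣ b) := by
    intro d
    simp only [hs, Finset.mem_filter, Nat.mem_divisors, Nat.mem_primeFactors]
    constructor
    · rintro ⟨⟨h1, -⟩, h2⟩
      exact ⟨h1, fun p hp hpd => h2 p ⟨hp, hpd, fun hd0 => ha (by simpa [hd0] using h1)⟩⟩
    · rintro ⟨h1, h2⟩
      exact ⟨⟨h1, ha⟩, fun p hp => h2 p hp.1 hp.2.1⟩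
  have h1s : (1 : ℕ) ∈ s := (hmem 1).2 ⟨one_dvd a, fun p hp hpd => absurd (Nat.dvd_one.1 hpd) hp.ne_one⟩
  obtain ⟨e, hes, hsup⟩ := Finset.exists_mem_eq_sup s ⟨1, h1s⟩ id
  have heta : eta a b = e := hsup
  obtain ⟨he1, he2⟩ := (hmem e).1 hes
  refine ⟨heta ▸ he1, fun p hp hpd => he2 p hp (heta ▸ hpd), ?_⟩
  intro d hd1 hd2
  have hd0 : d ≠ 0 := fun h => ha (by simpa [h] using hd1)
  have he0 : e ≠ 0 := fun h => ha (by simpa [h] using he1)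
  have hlcm : Nat.lcm d e ∈ s := by
    refine (hmem _).2 ⟨Nat.lcm_dvd hd1 he1, fun p hp hpd => ?_⟩
    rcases hp.dvd_mul.1 (hpd.trans (Nat.lcm_dvd_mul d e)) with h | h
    · exact hd2 p hp h
    · exact he2 p hp h
  have hle : Nat.lcm d e ≤ e := by
    have := Finset.le_sup (f := id) hlcm
    rw [hsup] at this
    exact this
  have hge : e ≤ Nat.lcm d e := Nat.le_of_dvd (Nat.pos_of_ne_zero (Nat.lcm_ne_zero hd0 he0)) (Nat.dvd_lcm_right d e)
  have : Nat.lcm d e = e := le_antisymm hle hge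
  rw [heta, ← this]
  exact Nat.dvd_lcm_left d e

lemma eta_dvd {a : ℕ} (b : ℕ) (ha : a ≠ 0) : eta a b ∣ a := (eta_spec b ha).1

lemma eta_ne_zero {a : ℕ} (b : ℕ) (ha : a ≠ 0) : eta a b ≠ 0 :=
  fun h => ha (by simpa [h] using eta_dvd b ha)

lemma eta_prime_dvd {a b p : ℕ} (ha : a ≠ 0) (hp : p.Prime) (h : p ∣ eta a b) : p ∣ b :=
  (eta_spec b ha).2.1 p hp h

lemma dvd_eta {a b d : ℕ} (ha : a ≠ 0) (hd1 : d ∣ a) (hd2 : ∀ p, p.Prime → p ∣ d → p ∣ b) :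
    d ∣ eta a b := (eta_spec b ha).2.2 d hd1 hd2

lemma eta_one {a : ℕ} (ha : a ≠ 0) : eta a 1 = 1 := by
  by_contra h
  obtain ⟨p, hp, hpd⟩ := Nat.exists_prime_and_dvd h
  exact hp.ne_one (Nat.dvd_one.1 (eta_prime_dvd ha hp hpd))

lemma eta_factorization {a b p : ℕ} (ha : a ≠ 0) (hp : p.Prime) :
    (eta a b).factorization p = if p ∣ b then a.factorization p else 0 := by
  split_ifs with hpb
  · refine le_antisymm ?_ ?_
    · exact (Nat.factorization_le_iff_dvd (eta_ne_zero b ha) ha).2 (eta_dvd b ha) p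
    · rw [← hp.pow_dvd_iff_le_factorization (eta_ne_zero b ha)]
      refine dvd_eta ha (Nat.ordProj_dvd a p) (fun q hq hqd => ?_)
      have : q = p := (Nat.prime_dvd_prime_iff_eq hq hp).1 (hq.dvd_of_dvd_pow hqd)
      exact this ▸ hpb
  · exact Nat.factorization_eq_zero_of_not_dvd (fun h => hpb (eta_prime_dvd ha hp h))

lemma phi_dvd_phi {a b₁ b₂ : ℕ} (ha : a ≠ 0) (h1 : b₁ ≠ 0) (h2 : b₂ ≠ 0) (h : b₁ ∣ b₂) :
    b₁ * eta a b₁ ∣ b₂ * eta a b₂ := by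
  rw [← Nat.factorization_le_iff_dvd (mul_ne_zero h1 (eta_ne_zero b₁ ha))
    (mul_ne_zero h2 (eta_ne_zero b₂ ha)), Finsupp.le_def]
  intro p
  by_cases hp : p.Prime
  · rw [Nat.factorization_mul h1 (eta_ne_zero b₁ ha), Nat.factorization_mul h2 (eta_ne_zero b₂ ha),
      Finsupp.add_apply, Finsupp.add_apply, eta_factorization ha hp, eta_factorization ha hp]
    have hmono : b₁.factorization p ≤ b₂.factorization p :=
      (Nat.factorization_le_iff_dvd h1 h2).2 h p
    by_cases hpb1 : p ∣ b₁
    · rw [if_pos hpb1, if_pos (hpb1.trans h)]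
      omega
    · rw [if_neg hpb1, Nat.factorization_eq_zero_of_not_dvd hpb1]
      omega
  · simp [Nat.factorization_eq_zero_of_not_prime _ hp]

lemma phi_dvd_phi_rev {a b₁ b₂ : ℕ} (ha : a ≠ 0) (h1 : b₁ ≠ 0) (h2 : b₂ ≠ 0)
    (h : b₁ * eta a b₁ ∣ b₂ * eta a b₂) : b₁ ∣ b₂ := by
  rw [← Nat.factorization_le_iff_dvd h1 h2, Finsupp.le_def]
  intro p
  by_cases hp : p.Prime
  · have key := (Nat.factorization_le_iff_dvd (mul_ne_zero h1 (eta_ne_zero b₁ ha))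
      (mul_ne_zero h2 (eta_ne_zero b₂ ha))).2 h p
    rw [Nat.factorization_mul h1 (eta_ne_zero b₁ ha), Nat.factorization_mul h2 (eta_ne_zero b₂ ha),
      Finsupp.add_apply, Finsupp.add_apply, eta_factorization ha hp, eta_factorization ha hp] at key
    by_cases hpb1 : p ∣ b₁
    · rw [if_pos hpb1] at key
      have hpos : 0 < b₁.factorization p := hp.factorization_pos_of_dvd h1 hpb1
      by_cases hpb2 : p ∣ b₂
      · rw [if_pos hpb2] at key; omega
      · rw [if_neg hpb2, Nat.factorization_eq_zero_of_not_dvd hpb2] at key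
        omega
    · rw [Nat.factorization_eq_zero_of_not_dvd hpb1]
      omega
  · simp [Nat.factorization_eq_zero_of_not_prime _ hp]

lemma dvd_of_mul_gcd_dvd {a b q : ℕ} (ha : a ≠ 0) (hb : b ≠ 0) (hq : q ≠ 0)
    (h : b * Nat.gcd a q ∣ q) : b * eta a b ∣ q := by
  have hg : Nat.gcd a q ≠ 0 := Nat.gcd_ne_zero_left ha
  rw [← Nat.factorization_le_iff_dvd (mul_ne_zero hb (eta_ne_zero b ha)) hq, Finsupp.le_def]
  intro p
  by_cases hp : p.Prime
  · have key := (Nat.factorization_le_iff_dvd (mul_ne_zero hb hg) hq).2 h p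
    rw [Nat.factorization_mul hb hg, Finsupp.add_apply] at key
    rw [Nat.factorization_mul hb (eta_ne_zero b ha), Finsupp.add_apply, eta_factorization ha hp]
    by_cases hpb : p ∣ b
    · rw [if_pos hpb]
      have hpos : 0 < b.factorization p := hp.factorization_pos_of_dvd hb hpb
      have hmin : min (a.factorization p) (q.factorization p) ≤ (Nat.gcd a q).factorization p := by
        rw [← hp.pow_dvd_iff_le_factorization hg]
        exact Nat.dvd_gcd ((pow_dvd_pow p (min_le_left _ _)).trans (Nat.ordProj_dvd a p))
          ((pow_dvd_pow p (min_le_right _ _)).trans (Nat.ordProj_dvd q p))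
      omega
    · rw [if_neg hpb, Nat.factorization_eq_zero_of_not_dvd hpb]
      omega
  · simp [Nat.factorization_eq_zero_of_not_prime _ hp]

section Seq
variable {α : Type*}

lemma period_add_mul (L : ℕ → α) (d : ℕ) (h : ∀ i, L (i + d) = L i) :
    ∀ (k i : ℕ), L (i + d * k) = L i := by
  intro k
  induction k with
  | zero => simp
  | succ k ih =>
    intro i
    have : i + d * (k + 1) = (i + d * k) + d := by ring
    rw [this, h, ih]

lemma period_mod (L : ℕ → α) (d : ℕ) (h : ∀ i, L (i + d) = L i) (i : ℕ) :
    L i = L (i % d) := by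
  conv_lhs => rw [← Nat.mod_add_div i d]
  rw [period_add_mul L d h]

lemma min_period_dvd (L : ℕ → α) {p : ℕ} (hp : 0 < p) (hper : ∀ i, L (i + p) = L i)
    (hmin : ∀ d, 0 < d → (∀ i, L (i + d) = L i) → p ≤ d) :
    ∀ d, (∀ i, L (i + d) = L i) → p ∣ d := by
  intro d
  induction d using Nat.strong_induction_on with
  | _ d ih =>
    intro hd
    rcases Nat.eq_zero_or_pos d with h0 | h0
    · simp [h0]
    have hpd : p ≤ d := hmin d h0 hd
    rcases eq_or_lt_of_le hpd with heq | hlt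
    · exact heq ▸ dvd_refl p
    have hsub : ∀ i, L (i + (d - p)) = L i := by
      intro i
      have h1 : (i + (d - p)) + p = i + d := by omega
      have := hper (i + (d - p))
      rw [h1] at this
      rw [← this, hd]
    obtain ⟨w, hw⟩ := ih (d - p) (by omega) hsub
    exact ⟨w + 1, by rw [Nat.mul_add, Nat.mul_one]; omega⟩

end Seq

lemma specB (r a : ℕ) [NeZero r] (ha : 0 < a) (x : Fin r → ℕ) {q : ℕ}
    (hq : IsPeriodLen r (fun i => a * x i) q) :
    ∃ b, IsPeriodLen r x b ∧ b * Nat.gcd a q ∣ q := by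
  classical
  obtain ⟨hq0, M, hM0, hrec, hper, -⟩ := hq
  simp only [] at hrec
  obtain ⟨i₀, hi₀'⟩ := Function.ne_iff.1 hM0
  have hi₀ : M i₀ ≠ 0 := by simpa using hi₀'
  set j := i₀ % a with hj
  set L : ℕ → ZMod 2 := fun k => M (a * k + j) with hL
  have hL0 : L ≠ 0 := by
    refine Function.ne_iff.2 ⟨i₀ / a, ?_⟩
    have : a * (i₀ / a) + j = i₀ := Nat.div_add_mod i₀ a
    simpa [hL, this] using hi₀
  have hLrec : ∀ i, (∀ l, x l - x 0 ≤ i) →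
      L i = ∑ l ∈ Finset.univ.erase (0 : Fin r), L (i - (x l - x 0)) := by
    intro k hk
    have hcond : ∀ l, a * x l - a * x 0 ≤ a * k + j := by
      intro l
      have h1 : a * x l - a * x 0 = a * (x l - x 0) := (Nat.mul_sub a _ _).symm
      have h2 : a * (x l - x 0) ≤ a * k := Nat.mul_le_mul_left a (hk l)
      omega
    have hkey := hrec (a * k + j) hcond
    rw [hL]
    simp only []
    rw [hkey]
    refine Finset.sum_congr rfl (fun l _ => ?_)
    congr 1
    have h1 : a * x l - a * x 0 = a * (x l - x 0) := (Nat.mul_sub a _ _).symm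
    have h2 : a * (x l - x 0) ≤ a * k := Nat.mul_le_mul_left a (hk l)
    have h3 : a * (k - (x l - x 0)) = a * k - a * (x l - x 0) := Nat.mul_sub a _ _
    omega
  -- q̄ := q / gcd a q is a period of L
  set g := Nat.gcd a q with hg
  have hgdvd : g ∣ q := Nat.gcd_dvd_right a q
  have hgpos : 0 < g := Nat.gcd_pos_of_pos_left q ha
  obtain ⟨t, ht⟩ : g ∣ a := Nat.gcd_dvd_left a q
  have haq : a * (q / g) = q * t := by
    rw [ht, mul_comm g t, mul_assoc, Nat.mul_div_cancel' hgdvd, mul_comm]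
  have hqbar : 0 < q / g := Nat.div_pos (Nat.le_of_dvd hq0 hgdvd) hgpos
  have hLper : ∀ i, L (i + q / g) = L i := by
    intro i
    show M (a * (i + q / g) + j) = M (a * i + j)
    have : a * (i + q / g) + j = (a * i + j) + q * t := by rw [mul_add, haq]; ring
    rw [this, period_add_mul M q hper t]
  -- minimal period
  have hex : ∃ d, 0 < d ∧ ∀ i, L (i + d) = L i := ⟨q / g, hqbar, hLper⟩
  set b := Nat.find hex with hb
  obtain ⟨hb0, hbper⟩ := Nat.find_spec hex
  have hbmin : ∀ d, 0 < d → (∀ i, L (i + d) = L i) → b ≤ d :=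
    fun d h1 h2 => Nat.find_min' hex ⟨h1, h2⟩
  have hbdvd : b ∣ q / g := min_period_dvd L hb0 hbper hbmin _ hLper
  refine ⟨b, ⟨hb0, L, hL0, hLrec, hbper, hbmin⟩, ?_⟩
  have := mul_dvd_mul_right hbdvd g
  rwa [Nat.div_mul_cancel hgdvd] at this

lemma specA (r a : ℕ) [NeZero r] (ha : 0 < a) (x : Fin r → ℕ) {b : ℕ}
    (hb : IsPeriodLen r x b) : IsPeriodLen r (fun i => a * x i) (b * eta a b) := by
  classical
  have ha' : a ≠ 0 := ha.ne'
  obtain ⟨hb0, L, hL0, hrec, hper, hmin⟩ := hb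
  by_cases hb1 : b = 1
  · -- constant case
    subst hb1
    rw [eta_one ha', mul_one]
    have hconst : ∀ i, L i = L 0 := by
      intro i
      induction i with
      | zero => rfl
      | succ i ih => rw [← ih]; exact hper i
    set T := Finset.univ.sup (fun l : Fin r => x l - x 0) with hT
    have hTc : ∀ l : Fin r, x l - x 0 ≤ T := fun l => Finset.le_sup (f := fun l : Fin r => x l - x 0) (Finset.mem_univ l)
    have hkey : L 0 = ∑ _l ∈ Finset.univ.erase (0 : Fin r), L 0 := by
      calc L 0 = L T := (hconst T).symm
      _ = ∑ l ∈ Finset.univ.erase (0 : Fin r), L (T - (x l - x 0)) := hrec T hTc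
      _ = ∑ _l ∈ Finset.univ.erase (0 : Fin r), L 0 :=
          Finset.sum_congr rfl (fun l _ => hconst _)
    refine ⟨one_pos, L, hL0, ?_, hper, fun d hd _ => hd⟩
    intro i _
    calc L i = L 0 := hconst i
    _ = ∑ _l ∈ Finset.univ.erase (0 : Fin r), L 0 := hkey
    _ = ∑ l ∈ Finset.univ.erase (0 : Fin r), L (i - (a * x l - a * x 0)) :=
        Finset.sum_congr rfl (fun l _ => (hconst _).symm)
  · have hb2 : 1 < b := by omega
    set η := eta a b with hηdef
    have hη0 : 0 < η := Nat.pos_of_ne_zero (eta_ne_zero b ha')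
    have hηd : η ∣ a := eta_dvd b ha'
    set a₂ := a / η with ha₂def
    have haa : η * a₂ = a := Nat.mul_div_cancel' hηd
    have ha₂0 : 0 < a₂ := Nat.div_pos (Nat.le_of_dvd ha hηd) hη0
    set n := b * η with hndef
    have hbn : b ≤ n := Nat.le_mul_of_pos_right b hη0
    have hn1 : 1 < n := by omega
    have hn0 : 0 < n := by omega
    have hcop : a₂.Coprime n := by
      by_contra h
      obtain ⟨p, hp, hpd⟩ := Nat.exists_prime_and_dvd h
      have hpa₂ : p ∣ a₂ := hpd.trans (Nat.gcd_dvd_left _ _)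
      have hpn : p ∣ n := hpd.trans (Nat.gcd_dvd_right _ _)
      have hpb : p ∣ b := by
        rcases hp.dvd_mul.1 hpn with h' | h'
        · exact h'
        · exact eta_prime_dvd ha' hp h'
      have hdvda : η * p ∣ a := by
        rw [← haa]
        exact mul_dvd_mul_left η hpa₂
      have hprimes : ∀ q, q.Prime → q ∣ η * p → q ∣ b := by
        intro q hq hqd
        rcases hq.dvd_mul.1 hqd with h' | h'
        · exact eta_prime_dvd ha' hq h'
        · rwa [(Nat.prime_dvd_prime_iff_eq hq hp).1 h']
      have hcontra : η * p ∣ η := dvd_eta ha' hdvda hprimes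
      have hle := Nat.le_of_dvd hη0 hcontra
      have h2p := hp.two_le
      nlinarith
    obtain ⟨c, -, hc⟩ := Nat.exists_mul_mod_eq_one_of_coprime hcop hn1
    have hmodeq : a₂ * c ≡ 1 [MOD n] := by
      show a₂ * c % n = 1 % n
      rw [hc, Nat.mod_eq_of_lt hn1]
    set N : ℕ → ZMod 2 := fun i => L (i / η) with hNdef
    set M : ℕ → ZMod 2 := fun i => N (c * i % n) with hMdef
    have hNper : ∀ i, N (i + n) = N i := by
      intro i
      show L ((i + n) / η) = L (i / η)
      have e : i + n = i + η * b := by rw [hndef]; ring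
      rw [e, Nat.add_mul_div_left i b hη0]
      exact hper (i / η)
    have hNmod : ∀ i, N i = N (i % n) := period_mod N n hNper
    have hMN : ∀ k, M (a₂ * k) = N k := by
      intro k
      show N (c * (a₂ * k) % n) = N k
      have h1 : c * (a₂ * k) = (a₂ * c) * k := by ring
      have h2 : (a₂ * c) * k % n = (1 * k) % n := hmodeq.mul_right k
      rw [h1, h2, one_mul, ← hNmod]
    have hMper : ∀ i, M (i + n) = M i := by
      intro i
      show N (c * (i + n) % n) = N (c * i % n)
      congr 1
      rw [mul_add, Nat.add_mul_mod_self_right]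
    obtain ⟨k₀, hk₀'⟩ := Function.ne_iff.1 hL0
    have hk₀ : L k₀ ≠ 0 := by simpa using hk₀'
    have hM0 : M ≠ 0 := by
      refine Function.ne_iff.2 ⟨a₂ * (η * k₀), ?_⟩
      have e : M (a₂ * (η * k₀)) = L k₀ := by
        rw [hMN]
        show L ((η * k₀) / η) = L k₀
        rw [Nat.mul_div_cancel_left k₀ hη0]
      simp only [Pi.zero_apply]
      rw [e]
      exact hk₀
    have hMrec : ∀ i, (∀ l : Fin r, a * x l - a * x 0 ≤ i) →
        M i = ∑ l ∈ Finset.univ.erase (0 : Fin r), M (i - (a * x l - a * x 0)) := by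
      intro i hi
      set S := Finset.univ.sup (fun l : Fin r => x l - x 0) with hSdef
      have hSc : ∀ l : Fin r, x l - x 0 ≤ S := fun l => Finset.le_sup (f := fun l : Fin r => x l - x 0) (Finset.mem_univ l)
      set j := c * i + n * (η * S + η) with hjdef
      have hj1 : j % n = (c * i) % n := Nat.add_mul_mod_self_left _ _ _
      have hjge : η * (S + 1) ≤ j := by
        have h1 : η * S + η ≤ n * (η * S + η) := Nat.le_mul_of_pos_left _ hn0
        have h2 : η * (S + 1) = η * S + η := by ring
        omega
      have hjdiv : ∀ l : Fin r, x l - x 0 ≤ j / η := by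
        intro l
        have h1 : S + 1 ≤ j / η := (Nat.le_div_iff_mul_le hη0).2 (by rw [mul_comm]; exact hjge)
        have h2 := hSc l
        omega
      have hMij : M i = N j := by
        show N (c * i % n) = N j
        rw [← hj1, ← hNmod]
      have hterm : ∀ l : Fin r, M (i - (a * x l - a * x 0)) = N (j - η * (x l - x 0)) := by
        intro l
        set D := x l - x 0 with hDdef
        have hsub : a * x l - a * x 0 = a * D := (Nat.mul_sub a _ _).symm
        have hDi : a * D ≤ i := hsub ▸ hi l
        have hηDj : η * D ≤ j :=
          le_trans (Nat.mul_le_mul_left η (by have := hSc l; omega : D ≤ S + 1)) hjge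
        have hu : c * (a * D) = (a₂ * c) * (η * D) := by rw [← haa]; ring
        have humod : (a₂ * c) * (η * D) ≡ 1 * (η * D) [MOD n] := hmodeq.mul_right _
        have hule : c * (a * D) ≤ c * i := Nat.mul_le_mul_left c hDi
        have e1 : c * i ≡ j [MOD n] := hj1.symm
        have e2 : η * D ≡ c * (a * D) [MOD n] := by
          rw [hu]
          simpa using humod.symm
        have hadd : c * i + η * D ≡ j + c * (a * D) [MOD n] := e1.add e2
        have hclaim : c * (i - a * D) % n = (j - η * D) % n := by
          have e3 : c * (i - a * D) = c * i - c * (a * D) := Nat.mul_sub c _ _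
          have goal' : (c * i - c * (a * D)) + (c * (a * D) + η * D) ≡
              (j - η * D) + (c * (a * D) + η * D) [MOD n] := by
            have lhs : (c * i - c * (a * D)) + (c * (a * D) + η * D) = c * i + η * D := by omega
            have rhs : (j - η * D) + (c * (a * D) + η * D) = j + c * (a * D) := by omega
            rw [lhs, rhs]
            exact hadd
          have hcan := Nat.ModEq.add_right_cancel' _ goal'
          rw [e3]
          exact hcan
        show N (c * (i - (a * x l - a * x 0)) % n) = N (j - η * D)
        rw [hsub, hclaim, ← hNmod]
      have hNrec : N j = ∑ l ∈ Finset.univ.erase (0 : Fin r), N (j - η * (x l - x 0)) := by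
        have hLj := hrec (j / η) hjdiv
        show L (j / η) = _
        rw [hLj]
        refine Finset.sum_congr rfl (fun l _ => ?_)
        show L (j / η - (x l - x 0)) = L ((j - η * (x l - x 0)) / η)
        rw [Nat.sub_mul_div j η (x l - x 0)]
      rw [hMij, hNrec]
      exact Finset.sum_congr rfl (fun l _ => (hterm l).symm)
    have hMmin : ∀ d, 0 < d → (∀ i, M (i + d) = M i) → n ≤ d := by
      intro d hd hdper
      have hNd : ∀ k, N (k + d) = N k := by
        intro k
        have h1 : N (k + d) = M (a₂ * (k + d)) := (hMN _).symm
        have h2 : a₂ * (k + d) = a₂ * k + d * a₂ := by ring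
        rw [h1, h2, period_add_mul M d hdper, hMN]
      set t := d / η with htdef
      set u := d % η with hudef
      have hdu : d = η * t + u := (Nat.div_add_mod d η).symm
      have hult : u < η := Nat.mod_lt d hη0
      have h1 : ∀ m, L (m + t) = L m := by
        intro m
        have h : L ((η * m + d) / η) = L ((η * m) / η) := hNd (η * m)
        have e1 : η * m + d = u + η * (m + t) := by rw [hdu]; ring
        have e2 : (η * m + d) / η = m + t := by
          rw [e1, Nat.add_mul_div_left u (m + t) hη0, Nat.div_eq_of_lt hult, zero_add]
        have e3 : (η * m) / η = m := Nat.mul_div_cancel_left m hη0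
        rw [e2, e3] at h
        exact h
      rcases Nat.eq_zero_or_pos u with hu0 | hu0
      · have hbt : b ∣ t := min_period_dvd L hb0 hper hmin t h1
        obtain ⟨w, hw⟩ := hbt
        have hnd : n ∣ d := by
          refine ⟨w, ?_⟩
          rw [hdu, hu0, add_zero, hw, hndef]
          ring
        exact Nat.le_of_dvd hd hnd
      · exfalso
        have h2 : ∀ m, L (m + (t + 1)) = L m := by
          intro m
          have h : L ((η * m + (η - u) + d) / η) = L ((η * m + (η - u)) / η) :=
            hNd (η * m + (η - u))
          have e4 : η * (m + t + 1) = η * m + η * t + η := by ring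
          have e1 : η * m + (η - u) + d = η * (m + t + 1) := by omega
          have e2 : (η * (m + t + 1)) / η = m + t + 1 := Nat.mul_div_cancel_left _ hη0
          have e3 : (η * m + (η - u)) / η = m := by
            rw [show η * m + (η - u) = (η - u) + η * m by ring,
              Nat.add_mul_div_left _ m hη0, Nat.div_eq_of_lt (by omega), zero_add]
          rw [e1, e2, e3] at h
          exact h
        have hbt : b ∣ t := min_period_dvd L hb0 hper hmin t h1
        have hbt1 : b ∣ t + 1 := min_period_dvd L hb0 hper hmin (t + 1) h2
        have hb1' : b ∣ 1 := by
          have := Nat.dvd_sub hbt1 hbt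
          simpa using this
        have := Nat.le_of_dvd one_pos hb1'
        omega
    exact ⟨by positivity, M, hM0, hMrec, hMper, hMmin⟩


theorem stmt18 (r a : ℕ) [NeZero r] (ha : 0 < a) (x : Fin r → ℕ)
    (hmono : StrictMono x) :
    kernel (caSpectrum r (fun i => a * x i)) =
      (fun b => b * eta a b) '' kernel (caSpectrum r x) := by
  have ha' : a ≠ 0 := ha.ne'
  ext q
  simp only [kernel, caSpectrum, Set.mem_setOf_eq, Set.mem_sep_iff, Set.mem_image]
  constructor
  · rintro ⟨hqF, hqmin⟩
    have hq0 : q ≠ 0 := hqF.1.ne'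
    obtain ⟨b, hbE, hgcd⟩ := specB r a ha x hqF
    have hb0 : b ≠ 0 := hbE.1.ne'
    have hbdvd : b * eta a b ∣ q := dvd_of_mul_gcd_dvd ha' hb0 hq0 hgcd
    have hphiF : IsPeriodLen r (fun i => a * x i) (b * eta a b) := specA r a ha x hbE
    have heq : b * eta a b = q := by
      by_contra hne
      exact hqmin _ hphiF hne hbdvd
    refine ⟨b, ⟨hbE, ?_⟩, heq⟩
    intro z hzE hzne hzdvd
    have hz0 : z ≠ 0 := hzE.1.ne'
    have hphiz : IsPeriodLen r (fun i => a * x i) (z * eta a z) := specA r a ha x hzE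
    have hdvd' : z * eta a z ∣ q := heq ▸ phi_dvd_phi ha' hz0 hb0 hzdvd
    have hne' : z * eta a z ≠ q := by
      intro h
      have h1 : z ∣ b := phi_dvd_phi_rev ha' hz0 hb0 (by rw [h, ← heq])
      have h2 : b ∣ z := phi_dvd_phi_rev ha' hb0 hz0 (by rw [heq, ← h])
      exact hzne (Nat.dvd_antisymm h1 h2)
    exact hqmin _ hphiz hne' hdvd'
  · rintro ⟨b, ⟨hbE, hbmin⟩, rfl⟩
    have hb0 : b ≠ 0 := hbE.1.ne'
    refine ⟨specA r a ha x hbE, ?_⟩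
    intro z hzF hzne hzdvd
    have hz0 : z ≠ 0 := hzF.1.ne'
    obtain ⟨b', hb'E, hgcd'⟩ := specB r a ha x hzF
    have hb'0 : b' ≠ 0 := hb'E.1.ne'
    have hb'dvd : b' * eta a b' ∣ z := dvd_of_mul_gcd_dvd ha' hb'0 hz0 hgcd'
    have h1 : b' * eta a b' ∣ b * eta a b := hb'dvd.trans hzdvd
    have h2 : b' ∣ b := phi_dvd_phi_rev ha' hb'0 hb0 h1
    have hb'b : b' = b := by
      by_contra hne
      exact hbmin b' hb'E hne h2
    subst hb'b
    exact hzne (Nat.dvd_antisymm hzdvd hb'dvd)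
end
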